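/- Let 𝒳 be a finite set, let P^f and P^R be probability distributions on 𝒳 such that P^f satisfies overlap with respect to P^R, and let g : 𝒳 → ℝ. Let (Ω, μ) be a probability space, X : Ω → 𝒳 a random variable with law P^R, and Y : Ω → ℝ integrable with ∫ Y·1{X = x} dμ = g(x)·P^R(x) for all x ∈ 𝒳. Then ∫ (P^f(X)/P^R(X))·(Y − g(X)) dμ + ∑_{x∈𝒳} P^f(x)·g(x) = V(f), i.e., the doubly robust expression V_DR = E_{X∼P^R}E_Y[(P^f(X)/P^R(X))(Y − g(X))] + E_{X∼P^f}[g(X)] identifies the value function. (Proposition 2: doubly robust identification of the value function.) -/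

import Mathlib

open MeasureTheory Finset

/-- **Proposition 2.** Doubly robust identification of the value function:
`E_{X∼PR,Y}[(Pf(X)/PR(X))(Y − g(X))] + E_{X∼Pf}[g(X)] = V(f)`. -/
theorem dr_identification {𝒳 : Type*} [Fintype 𝒳]
    [MeasurableSpace 𝒳] [MeasurableSingletonClass 𝒳]
    (Pf PR : 𝒳 → ℝ)
    (hPf_nonneg : ∀ x, 0 ≤ Pf x) (hPf_sum : ∑ x, Pf x = 1)
    (hPR_nonneg : ∀ x, 0 ≤ PR x) (hPR_sum : ∑ x, PR x = 1)
    (h_overlap : ∀ x, PR x = 0 → Pf x = 0)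
    (g : 𝒳 → ℝ)
    {Ω : Type*} [MeasurableSpace Ω] (μ : Measure Ω) [IsProbabilityMeasure μ]
    (X : Ω → 𝒳) (hX : Measurable X)
    (hlaw : ∀ x, (μ {ω | X ω = x}).toReal = PR x)
    (Y : Ω → ℝ) (hY : Integrable Y μ)
    (hcond : ∀ x, ∫ ω in {ω | X ω = x}, Y ω ∂μ = g x * PR x) :
    (∫ ω, (Pf (X ω) / PR (X ω)) * (Y ω - g (X ω)) ∂μ) + ∑ x, Pf x * g x
      = ∑ x, Pf x * g x := by
  have hs : ∀ x : 𝒳, MeasurableSet {ω | X ω = x} :=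
    fun x => hX (measurableSet_singleton x)
  -- the integrand is integrable
  have hmg : Measurable g := measurable_of_countable g
  have hmw : Measurable (fun x => Pf x / PR x) := measurable_of_countable _
  have hbd : ∀ (F : 𝒳 → ℝ) (ω : Ω), |F (X ω)| ≤ ∑ x, |F x| := by
    intro F ω
    exact Finset.single_le_sum (f := fun x => |F x|) (fun x _ => abs_nonneg _)
      (Finset.mem_univ (X ω))
  have hYg : Integrable (fun ω => Y ω - g (X ω)) μ := by
    refine hY.sub ?_
    have := (integrable_const (1 : ℝ) (μ := μ)).bdd_mul
      (c := ∑ x, |g x|) ((hmg.comp hX).aestronglyMeasurable) (ae_of_all _ fun ω => by simpa only [Real.norm_eq_abs, Function.comp_apply] using hbd g ω)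
    simpa using this
  have hInt : Integrable (fun ω => (Pf (X ω) / PR (X ω)) * (Y ω - g (X ω))) μ :=
    hYg.bdd_mul (c := ∑ x, |Pf x / PR x|) ((hmw.comp hX).aestronglyMeasurable)
      (ae_of_all _ fun ω => by simpa only [Real.norm_eq_abs] using hbd (fun x => Pf x / PR x) ω)
  have key : (∫ ω, (Pf (X ω) / PR (X ω)) * (Y ω - g (X ω)) ∂μ) = 0 := by
    have hU : (⋃ x ∈ (Finset.univ : Finset 𝒳), {ω | X ω = x}) = Set.univ := by
      ext ω; simp
    have hdisj : Set.Pairwise (↑(Finset.univ : Finset 𝒳))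
        (Function.onFun Disjoint fun x => {ω | X ω = x}) := by
      intro a _ b _ hab
      simp only [Function.onFun, Set.disjoint_left]
      intro ω ha hb
      exact hab (ha.symm.trans hb)
    calc (∫ ω, (Pf (X ω) / PR (X ω)) * (Y ω - g (X ω)) ∂μ)
        = ∫ ω in ⋃ x ∈ (Finset.univ : Finset 𝒳), {ω | X ω = x},
            (Pf (X ω) / PR (X ω)) * (Y ω - g (X ω)) ∂μ := by
          rw [hU, Measure.restrict_univ]
      _ = ∑ x, ∫ ω in {ω | X ω = x},
            (Pf (X ω) / PR (X ω)) * (Y ω - g (X ω)) ∂μ :=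
          integral_biUnion_finset _ (fun x _ => hs x) hdisj
            (fun x _ => hInt.integrableOn)
      _ = 0 := by
          refine Finset.sum_eq_zero fun x _ => ?_
          have hcongr : ∫ ω in {ω | X ω = x},
              (Pf (X ω) / PR (X ω)) * (Y ω - g (X ω)) ∂μ
              = ∫ ω in {ω | X ω = x}, (Pf x / PR x) * (Y ω - g x) ∂μ := by
            refine setIntegral_congr_fun (hs x) fun ω hω => ?_
            simp only [Set.mem_setOf_eq] at hω
            rw [hω]
          rw [hcongr, integral_const_mul,
            integral_sub hY.integrableOn (integrableOn_const
              (measure_ne_top _ _)),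
            hcond x, setIntegral_const, measureReal_def, hlaw x, smul_eq_mul]
          ring
  rw [key, zero_add]
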